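/- Let k_0,...,k_{d-1} be nonnegative integers and r ≥ d. Then Φ(∏_{i=0}^{d-1} t_i^{r - d + k_i - i}) = (-1)^{d(d-1)/2}·∏_{0≤i<j≤d-1}((k_i - i) - (k_j - j)) / ∏_{i=0}^{d-1}(r + k_i - i - 1)!, where Φ(f) = const_t(Δ(t)·exp(∑_i 1/t_i)·f) and 1/m! = 0 for m < 0. -/

import Mathlib

open Finset

/-- `1/m!` for an integer `m`, with the convention `1/m! = 0` for `m < 0`. -/
noncomputable def invFact (m : ℤ) : ℚ := if 0 ≤ m then ((Nat.factorial m.toNat : ℕ) : ℚ)⁻¹ else 0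

/-- The constant term of `Δ(t) · exp(∑_i 1/t_i) · ∏_i t_i^{m_i}`, where
`Δ(t) = ∏_{i<j}(t_i - t_j) = ∑_σ sgn(σ) ∏_i t_i^{d-1-σ(i)}`:  expanding the exponential
series, the constant term equals `∑_σ sgn(σ) ∏_i 1/(m_i + d - 1 - σ(i))!`. -/
noncomputable def phiC (d : ℕ) (m : Fin d → ℤ) : ℚ :=
  ∑ σ : Equiv.Perm (Fin d),
    ((Equiv.Perm.sign σ : ℤ) : ℚ) * ∏ i : Fin d, invFact (m i + (d : ℤ) - 1 - ((σ i : ℕ) : ℤ))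

/-- The linear form `Φ` on the Laurent polynomial ring `A[t_0^{±1}, …, t_{d-1}^{±1}]`
(realized as `AddMonoidAlgebra A (Fin d → ℤ)`), given by
`Φ(f) = const_t(Δ(t) · exp(∑_i 1/t_i) · f(t))`; by linearity it is determined by its
values `phiC d m` on the monomials `t^m`. -/
noncomputable def Phi (A : Type*) [CommRing A] [Algebra ℚ A] (d : ℕ)
    (f : AddMonoidAlgebra A (Fin d → ℤ)) : A :=
  f.coeff.sum fun m a => phiC d m • a

/-- The action of a permutation `σ` on Laurent polynomials, with `σ(t_i) = t_{σ(i)}`. -/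
noncomputable def permL {A : Type*} [CommRing A] {d : ℕ} (σ : Equiv.Perm (Fin d))
    (f : AddMonoidAlgebra A (Fin d → ℤ)) : AddMonoidAlgebra A (Fin d → ℤ) :=
  AddMonoidAlgebra.ofCoeff (Finsupp.mapDomain (fun m : Fin d → ℤ => m ∘ σ.symm) f.coeff)

/-- The Laurent monomial `t^m = ∏_i t_i^{m_i}` with coefficient `a`. -/
noncomputable def monoL (A : Type*) [CommRing A] {d : ℕ} (m : Fin d → ℤ) (a : A) :
    AddMonoidAlgebra A (Fin d → ℤ) := AddMonoidAlgebra.single m a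

lemma invFact_natCast (N : ℕ) : invFact (N : ℤ) = ((N.factorial : ℚ))⁻¹ := by
  simp [invFact]

lemma invFact_sub (N j : ℕ) :
    invFact ((N : ℤ) - j) = ((N.factorial : ℚ))⁻¹ * (N.descFactorial j : ℚ) := by
  rcases le_or_gt j N with h | h
  · have h2 : (N : ℤ) - j = ((N - j : ℕ) : ℤ) := by omega
    rw [h2, invFact_natCast]
    have hf := Nat.factorial_mul_descFactorial h
    have h3 : ((N - j).factorial : ℚ) * (N.descFactorial j : ℚ) = (N.factorial : ℚ) := by
      exact_mod_cast congrArg (Nat.cast (R := ℚ)) hf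
    field_simp
    linear_combination -h3
  · have h1 : ¬ (0 ≤ (N:ℤ) - j) := by omega
    rw [invFact, if_neg h1, Nat.descFactorial_eq_zero_iff_lt.mpr h]
    simp

lemma prod_filter_lt {M : Type*} [CommMonoid M] {d : ℕ} (f : Fin d → Fin d → M) :
    ∏ p ∈ Finset.univ.filter (fun p : Fin d × Fin d => p.1 < p.2), f p.1 p.2
      = ∏ i : Fin d, ∏ j ∈ Ioi i, f i j := by
  rw [Finset.prod_sigma']
  refine Finset.prod_nbij' (fun p => ⟨p.1, p.2⟩) (fun x => (x.1, x.2)) ?_ ?_ ?_ ?_ ?_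
  · intro a ha
    simp only [mem_filter, mem_univ, true_and] at ha
    simp [mem_sigma, mem_Ioi, ha]
  · intro a ha
    simp only [mem_sigma, mem_univ, true_and, mem_Ioi] at ha
    simp [ha]
  · intro a _; rfl
  · intro a _; rfl
  · intro a _; rfl

lemma sum_card_Ioi (d : ℕ) : (∑ i : Fin d, (Ioi i).card) = d * (d - 1) / 2 := by
  simp only [Fin.card_Ioi]
  rw [Fin.sum_univ_eq_sum_range (fun i => d - 1 - i), ← Finset.sum_range_reflect]
  have h1 : ∑ j ∈ Finset.range d, (d - 1 - (d - 1 - j)) = ∑ j ∈ Finset.range d, j :=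
    Finset.sum_congr rfl fun i hi => by simp only [Finset.mem_range] at hi; omega
  rw [h1]
  have h := Finset.sum_range_id_mul_two d
  omega

/-- For nonnegative integers `k_0, …, k_{d-1}` and `r ≥ d`,
`Φ(∏_i t_i^{r-d+k_i-i}) = (-1)^{d(d-1)/2} · ∏_{i<j}((k_i - i) - (k_j - j)) / ∏_i (r + k_i - i - 1)!`
(with `1/m! = 0` for `m < 0`). -/
theorem Phi_shifted_monomial (d r : ℕ) (hdr : d ≤ r) (k : Fin d → ℕ) :
    Phi ℚ d (monoL ℚ (fun i : Fin d => (r : ℤ) - d + k i - (i : ℕ)) 1) =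
      (-1) ^ (d * (d - 1) / 2) *
        (∏ p ∈ Finset.univ.filter (fun p : Fin d × Fin d => p.1 < p.2),
          (((k p.1 : ℚ) - (p.1 : ℕ)) - ((k p.2 : ℚ) - (p.2 : ℕ)))) *
        ∏ i : Fin d, invFact ((r : ℤ) + k i - (i : ℕ) - 1) := by
  set m : Fin d → ℤ := fun i : Fin d => (r : ℤ) - d + k i - (i : ℕ) with hm
  have h1 : Phi ℚ d (monoL ℚ m 1) = phiC d m := by
    rw [Phi, monoL]
    rw [show (AddMonoidAlgebra.single m (1:ℚ)).coeff = Finsupp.single m (1:ℚ) from rfl]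
    rw [Finsupp.sum_single_index (by simp)]
    simp
  rw [h1]
  set N : Fin d → ℕ := fun i => r + k i - ((i : ℕ) + 1) with hNdef
  have hNle : ∀ i : Fin d, (i : ℕ) + 1 ≤ r + k i := fun i =>
    le_trans (le_trans i.isLt hdr) (Nat.le_add_right r (k i))
  have hNcast : ∀ i : Fin d, ((N i : ℤ)) = (r : ℤ) + k i - (i : ℕ) - 1 := fun i => by
    have := hNle i
    simp only [hNdef]
    omega
  have h2 : phiC d m = Matrix.det (Matrix.of fun j i : Fin d => invFact ((N i : ℤ) - (j : ℕ))) := by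
    rw [Matrix.det_apply, phiC]
    refine Finset.sum_congr rfl fun σ _ => ?_
    rw [Units.smul_def, zsmul_eq_mul]
    congr 1
    refine Finset.prod_congr rfl fun i _ => ?_
    congr 1
    have hd : (i : ℕ) < d := i.isLt
    have := hNcast i
    simp only [hm]
    omega
  rw [h2]
  have h3 : (Matrix.of fun j i : Fin d => invFact ((N i : ℤ) - (j : ℕ)))
      = Matrix.of fun j i : Fin d => ((N i).factorial : ℚ)⁻¹ * ((N i).descFactorial (j : ℕ) : ℚ) := by
    ext j i; exact invFact_sub (N i) j
  rw [h3, Matrix.det_mul_row (fun i => ((N i).factorial : ℚ)⁻¹) (fun j i : Fin d => ((N i).descFactorial (j : ℕ) : ℚ))]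
  have h4 : (Matrix.det fun j i : Fin d => ((N i).descFactorial (j : ℕ) : ℚ))
      = Matrix.det (Matrix.vandermonde (fun i : Fin d => (N i : ℚ))) := by
    show (Matrix.of fun j i : Fin d => ((N i).descFactorial (j : ℕ) : ℚ)).det
      = Matrix.det (Matrix.vandermonde (fun i : Fin d => (N i : ℚ)))
    rw [← Matrix.det_transpose]
    rw [Matrix.det_eval_matrixOfPolynomials_eq_det_vandermonde (fun i : Fin d => (N i : ℚ))
      (fun j => descPochhammer ℚ (j : ℕ)) (fun i => descPochhammer_natDegree (R := ℚ) (i : ℕ))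
      (fun i => monic_descPochhammer _ _)]
    congr 1
    ext i j
    simp [Matrix.transpose_apply, descPochhammer_eval_eq_descFactorial]
  rw [h4, Matrix.det_vandermonde]
  have h5 : ∀ i j : Fin d, (N j : ℚ) - (N i : ℚ)
      = (-1) * (((k i : ℚ) - (i : ℕ)) - ((k j : ℚ) - (j : ℕ))) := by
    intro i j
    have hi := hNle i; have hj := hNle j
    simp only [hNdef]
    rw [Nat.cast_sub hi, Nat.cast_sub hj]
    push_cast
    ring
  have h6 : (∏ i : Fin d, ∏ j ∈ Ioi i, ((N j : ℚ) - (N i : ℚ)))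
      = (-1 : ℚ) ^ (d * (d - 1) / 2)
        * ∏ i : Fin d, ∏ j ∈ Ioi i, (((k i : ℚ) - (i : ℕ)) - ((k j : ℚ) - (j : ℕ))) := by
    calc (∏ i : Fin d, ∏ j ∈ Ioi i, ((N j : ℚ) - (N i : ℚ)))
        = ∏ i : Fin d, ∏ j ∈ Ioi i,
            ((-1) * (((k i : ℚ) - (i : ℕ)) - ((k j : ℚ) - (j : ℕ)))) :=
          Finset.prod_congr rfl fun i _ => Finset.prod_congr rfl fun j _ => h5 i j
      _ = (∏ i : Fin d, ∏ _j ∈ Ioi i, (-1 : ℚ))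
            * ∏ i : Fin d, ∏ j ∈ Ioi i, (((k i : ℚ) - (i : ℕ)) - ((k j : ℚ) - (j : ℕ))) := by
          simp only [Finset.prod_mul_distrib]
      _ = (-1 : ℚ) ^ (d * (d - 1) / 2)
            * ∏ i : Fin d, ∏ j ∈ Ioi i, (((k i : ℚ) - (i : ℕ)) - ((k j : ℚ) - (j : ℕ))) := by
          congr 1
          simp only [Finset.prod_const]
          rw [Finset.prod_pow_eq_pow_sum, sum_card_Ioi]
  rw [h6]
  have h7 : ∏ i : Fin d, invFact ((r : ℤ) + k i - (i : ℕ) - 1)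
      = ∏ i : Fin d, ((N i).factorial : ℚ)⁻¹ :=
    Finset.prod_congr rfl fun i _ => by rw [← hNcast i, invFact_natCast]
  rw [h7, prod_filter_lt (fun i j : Fin d => ((k i : ℚ) - (i : ℕ)) - ((k j : ℚ) - (j : ℕ)))]
  ring
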